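/- For τ ∈ (0,1) and 0 < ε < min(τ,1-τ), the symmetrized entropy gap satisfies H(τ) - (H(τ+ε) + H(τ-ε))/2 ≥ ε²/(2·ln 2·τ·(1-τ)). -/

import Mathlib

noncomputable def binEntropy (x : ℝ) : ℝ :=
  -(x * Real.logb 2 x) - (1 - x) * Real.logb 2 (1 - x)

private lemma log_ineq' (u : ℝ) (hu0 : 0 ≤ u) (hu1 : u < 1) :
    2 * u ≤ Real.log (1 + u) - Real.log (1 - u) := by
  set h : ℝ → ℝ := fun x => Real.log (1 + x) - Real.log (1 - x) - 2 * x with hh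
  have hd : ∀ x ∈ Set.Ioo (0:ℝ) 1, HasDerivAt h ((1 + x)⁻¹ + (1 - x)⁻¹ - 2) x := by
    intro x hx
    have h1 : (0:ℝ) < 1 + x := by linarith [hx.1]
    have h2 : (0:ℝ) < 1 - x := by linarith [hx.2]
    have d1 : HasDerivAt (fun y : ℝ => Real.log (1 + y)) ((1 + x)⁻¹) x := by
      have := (Real.hasDerivAt_log h1.ne').comp x ((hasDerivAt_id x).const_add 1)
      simpa [Function.comp_def] using this
    have d2 : HasDerivAt (fun y : ℝ => Real.log (1 - y)) (-(1 - x)⁻¹) x := by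
      have := (Real.hasDerivAt_log h2.ne').comp x ((hasDerivAt_id x).const_sub 1)
      simpa [Function.comp_def] using this
    have := (d1.sub d2).sub ((hasDerivAt_id x).const_mul 2)
    refine this.congr_deriv ?_
    ring
  have hcont : ContinuousOn h (Set.Ico 0 1) := by
    apply ContinuousOn.sub
    · apply ContinuousOn.sub
      · exact (continuousOn_const.add continuousOn_id).log
          (fun x hx => by have := hx.1; simp only [Pi.add_apply, id] at this ⊢; intro hc; linarith)
      · exact (continuousOn_const.sub continuousOn_id).log
          (fun x hx => by have := hx.2; simp only [Pi.sub_apply, id] at this ⊢; intro hc; linarith)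
    · exact continuousOn_const.mul continuousOn_id
  have hmono : MonotoneOn h (Set.Ico 0 1) := by
    apply monotoneOn_of_deriv_nonneg (convex_Ico 0 1) hcont
    · rw [interior_Ico]
      exact fun x hx => (hd x hx).differentiableAt.differentiableWithinAt
    · rw [interior_Ico]
      intro x hx
      rw [(hd x hx).deriv]
      have h1 : (0:ℝ) < 1 + x := by linarith [hx.1]
      have h2 : (0:ℝ) < 1 - x := by linarith [hx.2]
      have e1 : (2:ℝ) ≤ (1 + x)⁻¹ + (1 - x)⁻¹ := by
        rw [inv_add_inv h1.ne' h2.ne']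
        rw [le_div_iff₀ (by positivity)]
        nlinarith [sq_nonneg x]
      linarith
  have h0 : h 0 = 0 := by simp [hh]
  have := hmono (Set.mem_Ico.mpr ⟨le_refl 0, one_pos⟩) (Set.mem_Ico.mpr ⟨hu0, hu1⟩) hu0
  rw [h0] at this
  simp only [hh] at this
  linarith

private lemma key_ineq (u : ℝ) (hu0 : 0 ≤ u) (hu1 : u < 1) :
    u ^ 2 ≤ (1 + u) * Real.log (1 + u) + (1 - u) * Real.log (1 - u) := by
  set g : ℝ → ℝ := fun x => (1 + x) * Real.log (1 + x) + (1 - x) * Real.log (1 - x) - x ^ 2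
    with hg
  have hd : ∀ x ∈ Set.Ioo (0:ℝ) 1,
      HasDerivAt g (Real.log (1 + x) - Real.log (1 - x) - 2 * x) x := by
    intro x hx
    have h1 : (0:ℝ) < 1 + x := by linarith [hx.1]
    have h2 : (0:ℝ) < 1 - x := by linarith [hx.2]
    have d1 : HasDerivAt (fun y : ℝ => Real.log (1 + y)) ((1 + x)⁻¹) x := by
      have := (Real.hasDerivAt_log h1.ne').comp x ((hasDerivAt_id x).const_add 1)
      simpa [Function.comp_def] using this
    have d2 : HasDerivAt (fun y : ℝ => Real.log (1 - y)) (-(1 - x)⁻¹) x := by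
      have := (Real.hasDerivAt_log h2.ne').comp x ((hasDerivAt_id x).const_sub 1)
      simpa [Function.comp_def] using this
    have dA : HasDerivAt (fun y : ℝ => (1 + y) * Real.log (1 + y))
        (1 * Real.log (1 + x) + (1 + x) * (1 + x)⁻¹) x :=
      ((hasDerivAt_id x).const_add 1).mul d1
    have dB : HasDerivAt (fun y : ℝ => (1 - y) * Real.log (1 - y))
        ((-1) * Real.log (1 - x) + (1 - x) * (-(1 - x)⁻¹)) x :=
      ((hasDerivAt_id x).const_sub 1).mul d2
    have := (dA.add dB).sub (hasDerivAt_pow 2 x)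
    refine this.congr_deriv ?_
    field_simp
    ring
  have hcont : ContinuousOn g (Set.Ico 0 1) := by
    apply ContinuousOn.sub
    · apply ContinuousOn.add
      · exact (continuousOn_const.add continuousOn_id).mul
          ((continuousOn_const.add continuousOn_id).log
            (fun x hx => by have := hx.1; simp only [Pi.add_apply, id] at this ⊢; intro hc; linarith))
      · exact (continuousOn_const.sub continuousOn_id).mul
          ((continuousOn_const.sub continuousOn_id).log
            (fun x hx => by have := hx.2; simp only [Pi.sub_apply, id] at this ⊢; intro hc; linarith))
    · exact (continuousOn_id.pow 2)
  have hmono : MonotoneOn g (Set.Ico 0 1) := by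
    apply monotoneOn_of_deriv_nonneg (convex_Ico 0 1) hcont
    · rw [interior_Ico]
      exact fun x hx => (hd x hx).differentiableAt.differentiableWithinAt
    · rw [interior_Ico]
      intro x hx
      rw [(hd x hx).deriv]
      have := log_ineq' x hx.1.le hx.2
      linarith
  have h0 : g 0 = 0 := by simp [hg]
  have := hmono (Set.mem_Ico.mpr ⟨le_refl 0, one_pos⟩) (Set.mem_Ico.mpr ⟨hu0, hu1⟩) hu0
  rw [h0] at this
  simp only [hg] at this
  linarith

private lemma split_ineq (τ ε : ℝ) (hτ : 0 < τ) (hε0 : 0 < ε) (hε : ε < τ) :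
    ε ^ 2 / τ ≤ (τ + ε) * Real.log (τ + ε) + (τ - ε) * Real.log (τ - ε)
      - 2 * (τ * Real.log τ) := by
  set u := ε / τ with hu
  have hu0 : 0 ≤ u := by positivity
  have hu1 : u < 1 := (div_lt_one hτ).mpr hε
  have hk := key_ineq u hu0 hu1
  have e1 : τ + ε = τ * (1 + u) := by rw [hu]; field_simp
  have e2 : τ - ε = τ * (1 - u) := by rw [hu]; field_simp
  have h1 : (0:ℝ) < 1 + u := by linarith
  have h2 : (0:ℝ) < 1 - u := by linarith
  rw [e1, e2, Real.log_mul hτ.ne' h1.ne', Real.log_mul hτ.ne' h2.ne']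
  have hε2 : ε ^ 2 / τ = τ * u ^ 2 := by rw [hu]; field_simp
  rw [hε2]
  nlinarith [mul_le_mul_of_nonneg_left hk hτ.le]

theorem entropy_gap_lower_bound (τ ε : ℝ) (hτ0 : 0 < τ) (hτ1 : τ < 1)
    (hε0 : 0 < ε) (hε : ε < min τ (1 - τ)) :
    binEntropy τ - (binEntropy (τ + ε) + binEntropy (τ - ε)) / 2 ≥
      ε ^ 2 / (2 * Real.log 2 * τ * (1 - τ)) := by
  have hετ : ε < τ := lt_of_lt_of_le hε (min_le_left _ _)
  have hετ' : ε < 1 - τ := lt_of_lt_of_le hε (min_le_right _ _)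
  have h1τ : 0 < 1 - τ := by linarith
  have hL : 0 < Real.log 2 := Real.log_pos (by norm_num)
  have S1 := split_ineq τ ε hτ0 hε0 hετ
  have S2 := split_ineq (1 - τ) ε h1τ hε0 hετ'
  set N : ℝ := -(τ * Real.log τ) - (1 - τ) * Real.log (1 - τ) -
    ((-((τ + ε) * Real.log (τ + ε)) - (1 - (τ + ε)) * Real.log (1 - (τ + ε))) +
     (-((τ - ε) * Real.log (τ - ε)) - (1 - (τ - ε)) * Real.log (1 - (τ - ε)))) / 2 with hN
  have key2 : ε ^ 2 / (2 * τ * (1 - τ)) ≤ N := by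
    have ha : (1 : ℝ) - (τ + ε) = (1 - τ) - ε := by ring
    have hb : (1 : ℝ) - (τ - ε) = (1 - τ) + ε := by ring
    rw [hN, ha, hb]
    have hsum : ε ^ 2 / (2 * τ * (1 - τ)) = (ε ^ 2 / τ + ε ^ 2 / (1 - τ)) / 2 := by
      field_simp
      ring
    rw [hsum]
    linarith
  have heq : binEntropy τ - (binEntropy (τ + ε) + binEntropy (τ - ε)) / 2 = N / Real.log 2 := by
    simp only [binEntropy, Real.logb, hN]
    ring
  have heq2 : ε ^ 2 / (2 * Real.log 2 * τ * (1 - τ)) =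
      (ε ^ 2 / (2 * τ * (1 - τ))) / Real.log 2 := by
    rw [div_div]
    ring_nf
  rw [heq, heq2, ge_iff_le]
  exact (div_le_div_iff_of_pos_right hL).mpr key2
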